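/- arXiv:2502.14621 — 2 statements merged into one kernel-verified Lean document; each statement's English description precedes it below -/
import Mathlib

section
/- Let K be a bounded density on ℝ with compact support and τ² = ∫ K², let P(·|·) be a conditional density on ℝ₊ that is bounded and uniformly Lipschitz in its first variable, and let (z_k) be a sequence in ℝ₊ such that (1/n) Σ_{k=1}^n P(y₀|z_{k-1}) → μ(y₀) for a fixed y₀. With hₙ = n^{-γ}, 0 < γ < 1, define T_n = (1/(n hₙ)) Σ_{k=1}^n ∫ K²(u) P(hₙu + y₀ | z_{k-1}) du. Then n T_n ~ n^{1+γ} τ² μ(y₀) as n → ∞ (provided μ(y₀) > 0). -/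
open MeasureTheory Filter

/-- n·Tₙ ~ n^{1+γ} τ² μ(y₀) for the leading term of the
predictable quadratic variation of the kernel-estimation martingale. -/
theorem quadratic_variation_leading_term_equiv
    (K : ℝ → ℝ) (hK_nn : ∀ u, 0 ≤ K u) (hK_int : (∫ u, K u) = 1)
    (CK : ℝ) (hK_bdd : ∀ u, K u ≤ CK) (hK_supp : HasCompactSupport K)
    (τsq : ℝ) (hτ : τsq = ∫ u, (K u) ^ 2)
    (P : ℝ → ℝ → ℝ) (hP_nn : ∀ y x, 0 ≤ P y x)
    (CP : ℝ) (hP_bdd : ∀ y x, P y x ≤ CP)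
    (L : ℝ) (hLip : ∀ x y z : ℝ, |P y x - P z x| ≤ L * |y - z|)
    (z : ℕ → ℝ) (y₀ : ℝ) (μy : ℝ) (hμpos : 0 < μy)
    (hCesaro : Tendsto (fun n : ℕ =>
        (1 / (n : ℝ)) * ∑ k ∈ Finset.Icc 1 n, P y₀ (z (k - 1)))
      atTop (nhds μy))
    (γ : ℝ) (hγ0 : 0 < γ) (hγ1 : γ < 1)
    (h : ℕ → ℝ) (hh : ∀ n : ℕ, h n = (n : ℝ) ^ (-γ))
    (T : ℕ → ℝ)
    (hT : ∀ n : ℕ, T n = (1 / ((n : ℝ) * h n)) * ∑ k ∈ Finset.Icc 1 n,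
        ∫ u, (K u) ^ 2 * P (h n * u + y₀) (z (k - 1))) :
    Tendsto (fun n : ℕ => ((n : ℝ) * T n) / ((n : ℝ) ^ (1 + γ) * τsq * μy))
      atTop (nhds 1) := by
  -- basic positivity facts
  have hL0 : 0 ≤ L := by
    have := hLip 0 1 0
    have h0 := abs_nonneg (P 1 0 - P 0 0)
    simp at this
    linarith
  have hhnn : ∀ n : ℕ, 0 ≤ h n := by
    intro n; rw [hh]; positivity
  -- K is integrable
  have hKint : Integrable K := by
    by_contra hc
    rw [integral_undef hc] at hK_int
    norm_num at hK_int
  have hCK0 : 0 ≤ CK := le_trans (hK_nn 0) (hK_bdd 0)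
  have hKsm := hKint.aestronglyMeasurable
  have hK2sm : AEStronglyMeasurable (fun u => (K u) ^ 2) volume := by
    exact (hKsm.mul hKsm).congr (Filter.Eventually.of_forall fun u => by simp [Pi.mul_apply, pow_two])
  -- K² is integrable
  have hK2int : Integrable (fun u => (K u) ^ 2) := by
    refine (hKint.const_mul CK).mono' hK2sm ?_
    filter_upwards with u
    rw [Real.norm_eq_abs, abs_of_nonneg (sq_nonneg _)]
    have := mul_le_mul_of_nonneg_right (hK_bdd u) (hK_nn u)
    nlinarith
  -- K² · |u| is integrable (compact support)
  obtain ⟨R, hR⟩ := (hK_supp.isBounded.subset_closedBall 0)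
  have hR0 : 0 ≤ R ⊔ 0 := le_sup_right
  have hK2u_int : Integrable (fun u => (K u) ^ 2 * |u|) := by
    refine (hK2int.const_mul (R ⊔ 0)).mono'
      (hK2sm.mul (continuous_abs.aestronglyMeasurable)) ?_
    filter_upwards with u
    rw [Real.norm_eq_abs, abs_of_nonneg (by positivity)]
    by_cases hu : u ∈ tsupport K
    · have : |u| ≤ R ⊔ 0 := le_trans (by simpa using hR hu) le_sup_left
      calc (K u) ^ 2 * |u| ≤ (K u) ^ 2 * (R ⊔ 0) := by nlinarith [sq_nonneg (K u)]
        _ = (R ⊔ 0) * (K u) ^ 2 := by ring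
    · have : K u = 0 := image_eq_zero_of_notMem_tsupport hu
      simp [this]
  set C₁ : ℝ := ∫ u, (K u) ^ 2 * |u| with hC₁
  have hC₁0 : 0 ≤ C₁ := integral_nonneg fun u => by positivity
  -- continuity of P in its first variable
  have hPcont : ∀ x : ℝ, Continuous fun y => P y x := by
    intro x
    refine LipschitzWith.continuous (K := L.toNNReal) ?_
    intro y w
    rw [edist_dist, edist_dist, ← ENNReal.ofReal_coe_nnreal, Real.coe_toNNReal _ hL0, ← ENNReal.ofReal_mul (by positivity)]
    refine ENNReal.ofReal_le_ofReal ?_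
    simpa [Real.dist_eq] using hLip x y w
  -- integrability of the kernel smoothed integrand
  have hgint : ∀ (n : ℕ) (x : ℝ),
      Integrable (fun u => (K u) ^ 2 * P (h n * u + y₀) x) := by
    intro n x
    refine (hK2int.const_mul CP).mono'
      (hK2sm.mul (((hPcont x).comp (by continuity)).aestronglyMeasurable)) ?_
    filter_upwards with u
    rw [Real.norm_eq_abs, abs_of_nonneg (mul_nonneg (sq_nonneg _) (hP_nn _ _))]
    calc (K u) ^ 2 * P (h n * u + y₀) x ≤ (K u) ^ 2 * CP := by
          nlinarith [sq_nonneg (K u), hP_bdd (h n * u + y₀) x, hP_nn (h n * u + y₀) x]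
      _ = CP * (K u) ^ 2 := by ring
  -- key pointwise estimate
  have key : ∀ (n : ℕ) (x : ℝ),
      |(∫ u, (K u) ^ 2 * P (h n * u + y₀) x) - τsq * P y₀ x| ≤ L * C₁ * h n := by
    intro n x
    have hconst : τsq * P y₀ x = ∫ u, (K u) ^ 2 * P y₀ x := by
      rw [hτ, integral_mul_const]
    rw [hconst, ← integral_sub (hgint n x) ((hK2int.mul_const _))]
    calc |∫ u, ((K u) ^ 2 * P (h n * u + y₀) x - (K u) ^ 2 * P y₀ x)|
        ≤ ∫ u, |(K u) ^ 2 * P (h n * u + y₀) x - (K u) ^ 2 * P y₀ x| := by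
          simpa [Real.norm_eq_abs] using
            norm_integral_le_integral_norm
              (fun u => (K u) ^ 2 * P (h n * u + y₀) x - (K u) ^ 2 * P y₀ x)
      _ ≤ ∫ u, (L * h n) * ((K u) ^ 2 * |u|) := by
          refine integral_mono ((hgint n x).sub (hK2int.mul_const _)).abs
            (hK2u_int.const_mul _) ?_
          intro u
          dsimp only
          have h1 : |(K u) ^ 2 * P (h n * u + y₀) x - (K u) ^ 2 * P y₀ x|
              = (K u) ^ 2 * |P (h n * u + y₀) x - P y₀ x| := by
            rw [← mul_sub, abs_mul, abs_of_nonneg (sq_nonneg _)]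
          rw [h1]
          have h2 : |P (h n * u + y₀) x - P y₀ x| ≤ L * (h n * |u|) := by
            have := hLip x (h n * u + y₀) y₀
            simpa [abs_mul, abs_of_nonneg (hhnn n)] using this
          calc (K u) ^ 2 * |P (h n * u + y₀) x - P y₀ x|
              ≤ (K u) ^ 2 * (L * (h n * |u|)) := by
                nlinarith [sq_nonneg (K u), abs_nonneg (P (h n * u + y₀) x - P y₀ x)]
            _ = (L * h n) * ((K u) ^ 2 * |u|) := by ring
      _ = L * C₁ * h n := by rw [integral_const_mul, ← hC₁]; ring
  -- the averaged sums
  set S : ℕ → ℝ := fun n => (1 / (n : ℝ)) * ∑ k ∈ Finset.Icc 1 n,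
      ∫ u, (K u) ^ 2 * P (h n * u + y₀) (z (k - 1)) with hS_def
  set A : ℕ → ℝ := fun n => (1 / (n : ℝ)) * ∑ k ∈ Finset.Icc 1 n, P y₀ (z (k - 1)) with hA_def
  have hbound : ∀ n : ℕ, |S n - τsq * A n| ≤ L * C₁ * h n := by
    intro n
    rcases Nat.eq_zero_or_pos n with rfl | hn
    · simp only [hS_def, hA_def]
      simp
      exact mul_nonneg (mul_nonneg hL0 hC₁0) (hhnn 0)
    have hn0 : (0 : ℝ) < n := by exact_mod_cast hn
    have : S n - τsq * A n = (1 / (n : ℝ)) * ∑ k ∈ Finset.Icc 1 n,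
        ((∫ u, (K u) ^ 2 * P (h n * u + y₀) (z (k - 1))) - τsq * P y₀ (z (k - 1))) := by
      simp only [hS_def, hA_def, Finset.sum_sub_distrib, ← Finset.mul_sum]
      ring
    rw [this, abs_mul, abs_of_nonneg (by positivity)]
    calc (1 / (n : ℝ)) * |∑ k ∈ Finset.Icc 1 n,
          ((∫ u, (K u) ^ 2 * P (h n * u + y₀) (z (k - 1))) - τsq * P y₀ (z (k - 1)))|
        ≤ (1 / (n : ℝ)) * ∑ k ∈ Finset.Icc 1 n, (L * C₁ * h n) := by
          refine mul_le_mul_of_nonneg_left ?_ (by positivity)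
          refine le_trans (Finset.abs_sum_le_sum_abs _ _) ?_
          exact Finset.sum_le_sum fun k _ => key n (z (k - 1))
      _ = L * C₁ * h n := by
          rw [Finset.sum_const, Nat.card_Icc]
          simp
          field_simp
  -- h n → 0
  have hh0 : Tendsto h atTop (nhds 0) := by
    have := (tendsto_rpow_neg_atTop hγ0).comp (tendsto_natCast_atTop_atTop (R := ℝ))
    refine this.congr fun n => ?_
    rw [hh]; rfl
  -- S n → τsq * μy
  have hS : Tendsto S atTop (nhds (τsq * μy)) := by
    have herr : Tendsto (fun n => S n - τsq * A n) atTop (nhds 0) := by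
      refine squeeze_zero_norm (a := fun n => L * C₁ * h n) (fun n => ?_) ?_
      · simpa [Real.norm_eq_abs] using hbound n
      · simpa using (hh0.const_mul (L * C₁))
    have hA : Tendsto (fun n => τsq * A n) atTop (nhds (τsq * μy)) := hCesaro.const_mul τsq
    have := hA.add herr
    simpa using this.congr fun n => by ring
  -- τsq ≠ 0
  have hτne : τsq ≠ 0 := by
    intro h0
    have hz : (fun u => (K u) ^ 2) =ᵐ[volume] 0 :=
      (integral_eq_zero_iff_of_nonneg (fun u => sq_nonneg _) hK2int).mp (by rw [← hτ, h0])
    have hK0 : K =ᵐ[volume] (0 : ℝ → ℝ) := by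
      filter_upwards [hz] with u hu
      simpa [pow_eq_zero_iff] using hu
    have := integral_congr_ae hK0
    simp at this
    rw [this] at hK_int
    norm_num at hK_int
  -- eventual equality of the two expressions
  have heq : ∀ᶠ n in atTop, S n / (τsq * μy)
      = ((n : ℝ) * T n) / ((n : ℝ) ^ (1 + γ) * τsq * μy) := by
    filter_upwards [eventually_ge_atTop 1] with n hn
    have hn0 : (0 : ℝ) < n := by exact_mod_cast hn
    have hhpos : 0 < h n := by rw [hh]; positivity
    have hpow : (n : ℝ) ^ (1 + γ) = (n : ℝ) / h n := by
      rw [eq_div_iff hhpos.ne', hh, ← Real.rpow_add hn0, ← Real.rpow_one (n : ℝ)]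
      norm_num
    rw [hT n, hS_def, hpow]
    field_simp
  -- conclude
  have hfin := hS.div_const (τsq * μy)
  rw [div_self (by positivity)] at hfin
  exact hfin.congr' heq
end

section
/- Let M_n be an ℝ²-valued martingale whose predictable square variation matrix satisfies ⟨M⟩_n^{(1,1)} = n^{1+γ} ω₁ (1 + o(1)) a.s., ⟨M⟩_n^{(2,2)} = n ω₂ (1 + o(1)) a.s. with ω₁ > 0, ω₂ > 0, and off-diagonal entries O(n), for some 0 < γ < 1. Then ‖M_n‖/n → 0 almost surely. -/
open MeasureTheory Filter Topology

set_option maxHeartbeats 1000000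


private lemma abel_general (a u : ℕ → ℝ) (hu0 : u 0 = 0) (n : ℕ) :
    ∑ k ∈ Finset.Icc 1 (n+1), a k * (u k - u (k-1))
      = a (n+1) * u (n+1) - ∑ k ∈ Finset.Icc 1 n, (a (k+1) - a k) * u k := by
  induction n with
  | zero => simp [hu0]
  | succ n ih =>
      rw [Finset.sum_Icc_succ_top (by omega : 1 ≤ n+1+1), ih,
        Finset.sum_Icc_succ_top (by omega : 1 ≤ n+1)]
      simp only [Nat.add_sub_cancel]
      ring

private lemma kronecker {x : ℕ → ℝ} {L : ℝ}
    (hb : Tendsto (fun n => ∑ k ∈ Finset.Icc 1 n, x k / k) atTop (𝓝 L)) :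
    Tendsto (fun n => (∑ k ∈ Finset.Icc 1 n, x k) / n) atTop (𝓝 0) := by
  set b : ℕ → ℝ := fun n => ∑ k ∈ Finset.Icc 1 n, x k / k with hbdef
  have hb0 : b 0 = 0 := by simp [hbdef]
  have hstep : ∀ k : ℕ, 1 ≤ k → x k = (k : ℝ) * (b k - b (k-1)) := by
    intro k hk
    obtain ⟨m, rfl⟩ := Nat.exists_eq_add_of_le hk
    have hsucc : b (1 + m) = b m + x (1+m) / ((1+m : ℕ) : ℝ) := by
      simp only [hbdef, add_comm 1 m]
      rw [Finset.sum_Icc_succ_top (by omega : 1 ≤ m+1)]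
    simp only [add_comm 1 m] at hsucc ⊢
    rw [Nat.add_sub_cancel, hsucc]
    have hk0 : ((m+1 : ℕ):ℝ) ≠ 0 := by positivity
    field_simp
    ring
  have hmain : ∀ n : ℕ, (∑ k ∈ Finset.Icc 1 (n+1), x k) / ((n:ℝ)+1)
      = b (n+1) - (∑ k ∈ Finset.Icc 1 n, b k) / ((n:ℝ)+1) := by
    intro n
    have h1 : ∑ k ∈ Finset.Icc 1 (n+1), x k
        = ∑ k ∈ Finset.Icc 1 (n+1), (k:ℝ) * (b k - b (k-1)) :=
      Finset.sum_congr rfl fun k hk => hstep k (Finset.mem_Icc.mp hk).1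
    rw [h1, abel_general (fun k => (k:ℝ)) b hb0 n]
    have h2 : ∑ k ∈ Finset.Icc 1 n, (((k+1:ℕ):ℝ) - (k:ℝ)) * b k
        = ∑ k ∈ Finset.Icc 1 n, b k := by
      refine Finset.sum_congr rfl fun k hk => ?_
      push_cast; ring
    rw [h2]
    have hne : ((n:ℝ)+1) ≠ 0 := by positivity
    push_cast
    field_simp
  have hces : Tendsto (fun n : ℕ => ((n:ℝ))⁻¹ • ∑ i ∈ Finset.range n, b i) atTop (𝓝 L) :=
    hb.cesaro
  have hces' : Tendsto (fun n : ℕ => (∑ k ∈ Finset.Icc 1 n, b k) / ((n:ℝ)+1)) atTop (𝓝 L) := by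
    have := hces.comp (tendsto_add_atTop_nat 1)
    refine this.congr fun n => ?_
    simp only [Function.comp]
    rw [smul_eq_mul, inv_mul_eq_div]
    congr 1
    · rw [Finset.sum_range_succ', hb0, add_zero, ← Finset.Ico_add_one_right_eq_Icc,
        Finset.sum_Ico_eq_sum_range]
      simp [add_comm]
    · push_cast; ring
  have hfin : Tendsto (fun n : ℕ => (∑ k ∈ Finset.Icc 1 (n+1), x k) / ((n:ℝ)+1))
      atTop (𝓝 0) := by
    have := (hb.comp (tendsto_add_atTop_nat 1)).sub hces'
    rw [sub_self] at this
    refine this.congr fun n => ?_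
    simp only [Function.comp]
    rw [hmain n]
  rw [← tendsto_add_atTop_iff_nat 1]
  refine hfin.congr fun n => ?_
  push_cast
  ring_nf



private lemma weighted_bound {D : ℕ → ℝ} {C c : ℝ} (hC : 0 ≤ C) (hc1 : 1 ≤ c) (hc2 : c < 2)
    (hq : ∀ n : ℕ, 1 ≤ n → ∑ k ∈ Finset.Icc 1 n, D k ≤ C * (n:ℝ) ^ c) :
    ∃ B : ℝ, ∀ n : ℕ, ∑ k ∈ Finset.Icc 1 n, D k / (k:ℝ)^2 ≤ B := by
  set q : ℕ → ℝ := fun n => ∑ k ∈ Finset.Icc 1 n, D k with hqdef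
  have hq0 : q 0 = 0 := by simp [hqdef]
  set T : ℝ := ∑' k : ℕ, 3 * C * (k:ℝ) ^ (c - 3) with hT
  have hsummable : Summable (fun k : ℕ => 3 * C * (k:ℝ) ^ (c-3)) :=
    (Real.summable_nat_rpow.mpr (by linarith)).mul_left _
  have hTnn : 0 ≤ T := tsum_nonneg fun k => by positivity
  refine ⟨C + T, fun n => ?_⟩
  match n with
  | 0 => simp [hTnn, hC]; positivity
  | Nat.succ n =>
    have hDstep : ∀ k : ℕ, 1 ≤ k → D k = q k - q (k-1) := by
      intro k hk
      obtain ⟨m, rfl⟩ := Nat.exists_eq_add_of_le hk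
      simp only [hqdef, add_comm 1 m, Nat.add_sub_cancel]
      rw [Finset.sum_Icc_succ_top (by omega : 1 ≤ m+1)]
      ring
    have h1 : ∑ k ∈ Finset.Icc 1 (n+1), D k / (k:ℝ)^2
        = ∑ k ∈ Finset.Icc 1 (n+1), ((k:ℝ)^2)⁻¹ * (q k - q (k-1)) := by
      refine Finset.sum_congr rfl fun k hk => ?_
      rw [← hDstep k (Finset.mem_Icc.mp hk).1, div_eq_inv_mul]
    rw [h1, abel_general (fun k => ((k:ℝ)^2)⁻¹) q hq0 n]
    have hterm1 : (((n+1:ℕ):ℝ)^2)⁻¹ * q (n+1) ≤ C := by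
      have hn1 : (1:ℝ) ≤ ((n+1:ℕ):ℝ) := by exact_mod_cast Nat.one_le_iff_ne_zero.mpr (by omega)
      have hqle := hq (n+1) (by omega)
      have hpos : (0:ℝ) < ((n+1:ℕ):ℝ)^2 := by positivity
      calc (((n+1:ℕ):ℝ)^2)⁻¹ * q (n+1) ≤ (((n+1:ℕ):ℝ)^2)⁻¹ * (C * ((n+1:ℕ):ℝ)^c) := by
            exact mul_le_mul_of_nonneg_left hqle (by positivity)
        _ = C * (((n+1:ℕ):ℝ)^c / ((n+1:ℕ):ℝ)^((2:ℕ):ℝ)) := by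
            rw [Real.rpow_natCast]
            push_cast
            ring
        _ = C * ((n+1:ℕ):ℝ) ^ (c - 2) := by
            rw [Real.rpow_sub (by positivity)]
            norm_num
        _ ≤ C * 1 := by
            refine mul_le_mul_of_nonneg_left ?_ hC
            exact Real.rpow_le_one_of_one_le_of_nonpos hn1 (by linarith)
        _ = C := mul_one C
    have hterm2 : - ∑ k ∈ Finset.Icc 1 n, ((((k+1:ℕ):ℝ)^2)⁻¹ - ((k:ℝ)^2)⁻¹) * q k ≤ T := by
      rw [← Finset.sum_neg_distrib]
      have hle : ∀ k ∈ Finset.Icc 1 n, -(((((k+1:ℕ):ℝ)^2)⁻¹ - ((k:ℝ)^2)⁻¹) * q k)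
          ≤ 3 * C * (k:ℝ) ^ (c-3) := by
        intro k hk
        have hk1 : 1 ≤ k := (Finset.mem_Icc.mp hk).1
        have hkr : (1:ℝ) ≤ (k:ℝ) := by exact_mod_cast hk1
        have hkpos : (0:ℝ) < (k:ℝ) := by linarith
        have hw : ((k:ℝ)^2)⁻¹ - (((k+1:ℕ):ℝ)^2)⁻¹ ≤ 3 / (k:ℝ)^3 := by
          push_cast
          rw [inv_sub_inv (by positivity) (by positivity),
            div_le_div_iff₀ (by positivity) (by positivity)]
          nlinarith [sq_nonneg ((k:ℝ))]
        have hwnn : 0 ≤ ((k:ℝ)^2)⁻¹ - (((k+1:ℕ):ℝ)^2)⁻¹ := by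
          push_cast
          rw [sub_nonneg]
          gcongr <;> nlinarith
        calc -(((((k+1:ℕ):ℝ)^2)⁻¹ - ((k:ℝ)^2)⁻¹) * q k)
            = (((k:ℝ)^2)⁻¹ - (((k+1:ℕ):ℝ)^2)⁻¹) * q k := by ring
          _ ≤ (((k:ℝ)^2)⁻¹ - (((k+1:ℕ):ℝ)^2)⁻¹) * (C * (k:ℝ)^c) :=
              mul_le_mul_of_nonneg_left (hq k hk1) hwnn
          _ ≤ (3 / (k:ℝ)^3) * (C * (k:ℝ)^c) :=
              mul_le_mul_of_nonneg_right hw (by positivity)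
          _ = 3 * C * ((k:ℝ)^c / (k:ℝ)^((3:ℕ):ℝ)) := by
              rw [Real.rpow_natCast]
              ring
          _ = 3 * C * (k:ℝ) ^ (c-3) := by
              rw [Real.rpow_sub hkpos]
              norm_num
      calc ∑ k ∈ Finset.Icc 1 n, -(((((k+1:ℕ):ℝ)^2)⁻¹ - ((k:ℝ)^2)⁻¹) * q k)
          ≤ ∑ k ∈ Finset.Icc 1 n, 3 * C * (k:ℝ) ^ (c-3) := Finset.sum_le_sum hle
        _ ≤ T := Summable.sum_le_tsum _ (fun k _ => by positivity) hsummable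
    linarith


private lemma sq_le_of_rat {x y : ℝ} (h : ∀ q : ℚ, 2 * (q:ℝ) * x - (q:ℝ)^2 ≤ y) :
    x^2 ≤ y := by
  refine le_of_forall_pos_le_add fun ε hε => ?_
  obtain ⟨q, hq⟩ := exists_rat_near x (Real.sqrt_pos.mpr hε)
  have h1 : (x - q)^2 < ε := by
    have := abs_lt.mp hq
    nlinarith [Real.sq_sqrt hε.le, Real.sqrt_pos.mpr hε]
  nlinarith [h q]

section Prob
variable {Ω : Type*} {m0 : MeasurableSpace Ω} {P : Measure Ω} [IsProbabilityMeasure P]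
  {ℱ : Filtration ℕ m0}

private lemma integrable_mul_of_sq {f g : Ω → ℝ}
    (hfm : AEStronglyMeasurable f P) (hgm : AEStronglyMeasurable g P)
    (hf : Integrable (fun ω => f ω * f ω) P) (hg : Integrable (fun ω => g ω * g ω) P) :
    Integrable (fun ω => f ω * g ω) P := by
  refine Integrable.mono' (((hf.add hg).div_const 2)) (hfm.mul hgm) ?_
  refine Eventually.of_forall fun ω => ?_
  simp only [Pi.add_apply, norm_mul, Real.norm_eq_abs]
  nlinarith [sq_nonneg (|f ω| - |g ω|), sq_abs (f ω), sq_abs (g ω), abs_nonneg (f ω),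
    abs_nonneg (g ω)]

private lemma condExp_sq_jensen {m : MeasurableSpace Ω} (hm : m ≤ m0) {f : Ω → ℝ}
    (hf : Integrable f P) (hf2 : Integrable (fun ω => f ω * f ω) P) :
    ∀ᵐ ω ∂P, (P[f|m]) ω * (P[f|m]) ω ≤ (P[fun ω' => f ω' * f ω'|m]) ω := by
  have key : ∀ q : ℚ, ∀ᵐ ω ∂P, 2 * (q:ℝ) * (P[f|m]) ω - (q:ℝ)^2
      ≤ (P[fun ω' => f ω' * f ω'|m]) ω := by
    intro q
    have hint1 : Integrable (fun ω => 2 * (q:ℝ) * f ω - (q:ℝ)^2) P :=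
      ((hf.const_mul _).sub (integrable_const _))
    have hmono := condExp_mono (μ := P) (m := m) hint1 hf2
      (Eventually.of_forall fun ω => by
        show 2 * (q:ℝ) * f ω - (q:ℝ)^2 ≤ f ω * f ω
        nlinarith [sq_nonneg (f ω - (q:ℝ))] :
        (fun ω => 2 * (q:ℝ) * f ω - (q:ℝ)^2) ≤ᵐ[P] fun ω => f ω * f ω)
    have heq : P[fun ω => 2 * (q:ℝ) * f ω - (q:ℝ)^2|m]
        =ᵐ[P] fun ω => 2 * (q:ℝ) * (P[f|m]) ω - (q:ℝ)^2 := by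
      refine (condExp_sub (hf.const_mul _) (integrable_const _) m).trans ?_
      have h1 : P[fun ω => 2 * (q:ℝ) * f ω|m] =ᵐ[P] fun ω => 2 * (q:ℝ) * (P[f|m]) ω := by
        exact condExp_smul (μ := P) (m := m) (2 * (q:ℝ)) f
      have h2 : P[fun _ : Ω => (q:ℝ)^2|m] =ᵐ[P] fun _ => (q:ℝ)^2 := by
        rw [condExp_const hm]
      filter_upwards [h1, h2] with ω h1 h2
      simp [h1, h2]
    filter_upwards [hmono, heq] with ω h1 h2
    rw [← h2]
    exact h1
  rw [← ae_all_iff] at key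
  filter_upwards [key] with ω hω
  have := sq_le_of_rat (x := (P[f|m]) ω) (y := (P[fun ω' => f ω' * f ω'|m]) ω) hω
  nlinarith [this]

private lemma integrable_condExp_sq {m : MeasurableSpace Ω} (hm : m ≤ m0) {f : Ω → ℝ}
    (hf : Integrable f P) (hf2 : Integrable (fun ω => f ω * f ω) P) :
    Integrable (fun ω => (P[f|m]) ω * (P[f|m]) ω) P := by
  refine Integrable.mono' (integrable_condExp (m := m) (f := fun ω' => f ω' * f ω')) ?_ ?_
  · have h := (stronglyMeasurable_condExp (μ := P) (m := m) (f := f)).mono hm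
    exact (h.mul h).aestronglyMeasurable
  · filter_upwards [condExp_sq_jensen hm hf hf2] with ω hω
    rw [Real.norm_eq_abs, abs_mul, ← abs_mul, abs_mul_self]
    exact hω



private lemma coord_martingale {M : ℕ → Ω → Fin 2 → ℝ} (hm : Martingale M ℱ P) (i : Fin 2) :
    Martingale (fun n ω => M n ω i) ℱ P := by
  have hint : ∀ n, Integrable (fun ω => M n ω i) P := fun n =>
    (ContinuousLinearMap.proj (R := ℝ) (φ := fun _ : Fin 2 => ℝ) i).integrable_comp
      (hm.integrable n)
  have hadp : ∀ n, StronglyMeasurable[ℱ n] (fun ω => M n ω i) := fun n =>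
    (continuous_apply i).comp_stronglyMeasurable (hm.stronglyAdapted n)
  refine ⟨fun n => hadp n, fun s j hsj => ?_⟩
  refine (ae_eq_condExp_of_forall_setIntegral_eq (ℱ.le s) (hint j)
    (fun A _ _ => (hint s).integrableOn) (fun A hA _ => ?_)
    ((hadp s).aestronglyMeasurable)).symm
  have hvec : ∫ ω in A, M s ω ∂P = ∫ ω in A, M j ω ∂P := by
    rw [← setIntegral_condExp (ℱ.le s) (hm.integrable j) hA]
    exact setIntegral_congr_ae (ℱ.le s A hA)
      ((hm.condExp_ae_eq hsj).mono fun ω hω _ => hω.symm)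
  have h1 := (ContinuousLinearMap.proj (R := ℝ) (φ := fun _ : Fin 2 => ℝ) i).integral_comp_comm
    ((hm.integrable s).integrableOn (s := A))
  have h2 := (ContinuousLinearMap.proj (R := ℝ) (φ := fun _ : Fin 2 => ℝ) i).integral_comp_comm
    ((hm.integrable j).integrableOn (s := A))
  simp only [ContinuousLinearMap.proj_apply] at h1 h2
  rw [h1, h2, hvec]


variable {Ω : Type*} {m0 : MeasurableSpace Ω} {P : Measure Ω} [IsProbabilityMeasure P]
  {ℱ : Filtration ℕ m0}

private lemma martingale_sum_incr {Z : ℕ → Ω → ℝ}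
    (hadp : ∀ k, StronglyMeasurable[ℱ k] (Z k)) (hint : ∀ k, Integrable (Z k) P)
    (hcond : ∀ k : ℕ, 1 ≤ k → P[Z k|ℱ (k-1)] =ᵐ[P] 0) :
    Martingale (fun n ω => ∑ k ∈ Finset.Icc 1 n, Z k ω) ℱ P := by
  refine ⟨fun n => ?_, fun s j hsj => ?_⟩
  · exact Finset.stronglyMeasurable_fun_sum _ fun k hk =>
      (hadp k).mono (ℱ.mono (Finset.mem_Icc.mp hk).2)
  · have hsum : (fun ω => ∑ k ∈ Finset.Icc 1 j, Z k ω) = ∑ k ∈ Finset.Icc 1 j, Z k := by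
      funext ω; simp [Finset.sum_apply]
    show P[(fun ω => ∑ k ∈ Finset.Icc 1 j, Z k ω)|ℱ s] =ᵐ[P] fun ω => ∑ k ∈ Finset.Icc 1 s, Z k ω
    rw [hsum]
    have h1 : P[∑ k ∈ Finset.Icc 1 j, Z k|ℱ s]
        =ᵐ[P] ∑ k ∈ Finset.Icc 1 j, P[Z k|ℱ s] :=
      condExp_finset_sum (fun k _ => hint k) _
    have h2 : ∀ k ∈ Finset.Icc 1 j, P[Z k|ℱ s]
        =ᵐ[P] (if k ≤ s then Z k else 0) := by
      intro k hk
      obtain ⟨hk1, _⟩ := Finset.mem_Icc.mp hk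
      by_cases hks : k ≤ s
      · rw [if_pos hks]
        rw [condExp_of_stronglyMeasurable (ℱ.le s) ((hadp k).mono (ℱ.mono hks)) (hint k)]
      · rw [if_neg hks]
        have hsk : ℱ s ≤ ℱ (k-1) := ℱ.mono (by omega)
        calc P[Z k|ℱ s] =ᵐ[P] P[P[Z k|ℱ (k-1)]|ℱ s] :=
              (condExp_condExp_of_le hsk (ℱ.le (k-1))).symm
          _ =ᵐ[P] P[(0 : Ω → ℝ)|ℱ s] := condExp_congr_ae (hcond k hk1)
          _ = 0 := condExp_zero
    have h3 : ∑ k ∈ Finset.Icc 1 j, P[Z k|ℱ s]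
        =ᵐ[P] ∑ k ∈ Finset.Icc 1 j, (if k ≤ s then Z k else 0) := by
      have hae : ∀ᵐ ω ∂P, ∀ k ∈ (↑(Finset.Icc 1 j) : Set ℕ), (P[Z k|ℱ s]) ω
          = (if k ≤ s then Z k else 0) ω := by
        rw [ae_ball_iff (Finset.Icc 1 j : Finset ℕ).countable_toSet]
        exact fun k hk => h2 k hk
      filter_upwards [hae] with ω hω
      simp only [Finset.sum_apply]
      exact Finset.sum_congr rfl fun k hk => hω k (by exact_mod_cast hk)
    refine h1.trans (h3.trans ?_)
    have h4 : ∑ k ∈ Finset.Icc 1 j, (if k ≤ s then Z k else 0)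
        = fun ω => ∑ k ∈ Finset.Icc 1 s, Z k ω := by
      funext ω
      simp only [Finset.sum_apply, apply_ite (fun f : Ω → ℝ => f ω), Pi.zero_apply]
      rw [← Finset.sum_filter]
      congr 1
      ext k
      simp only [Finset.mem_filter, Finset.mem_Icc]
      omega
    rw [h4]

private lemma telescope_sum (N : ℕ → Ω → ℝ) (ω : Ω) :
    ∀ n : ℕ, ∑ k ∈ Finset.Icc 1 n, (N k ω - N (k-1) ω) = N n ω - N 0 ω := by
  intro n
  induction n with
  | zero => simp
  | succ n ih =>
      rw [Finset.sum_Icc_succ_top (by omega : 1 ≤ n+1), ih]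
      simp only [Nat.add_sub_cancel]
      ring



private lemma scalar_slln (N : ℕ → Ω → ℝ) (hN : Martingale N ℱ P)
    (hL2 : ∀ k, Integrable (fun ω => N k ω * N k ω) P)
    (c : ℝ) (hc1 : 1 ≤ c) (hc2 : c < 2)
    (hbd : ∀ᵐ ω ∂P, ∃ C : ℝ, 0 ≤ C ∧ ∀ n : ℕ, 1 ≤ n →
      (∑ k ∈ Finset.Icc 1 n, ((P[fun ω' => N k ω' * N k ω'|ℱ (k-1)]) ω
        - N (k-1) ω * N (k-1) ω)) ≤ C * (n:ℝ)^c) :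
    ∀ᵐ ω ∂P, Tendsto (fun n => N n ω / n) atTop (𝓝 0) := by
  classical
  set D : ℕ → Ω → ℝ := fun k ω =>
    (P[fun ω' => N k ω' * N k ω'|ℱ (k-1)]) ω - N (k-1) ω * N (k-1) ω with hD
  set X : ℕ → Ω → ℝ := fun k ω => (N k ω - N (k-1) ω) * ((k:ℝ))⁻¹ with hX
  set S : ℕ → Ω → ℝ := fun n ω => ∑ k ∈ Finset.Icc 1 n, D k ω / (k:ℝ)^2 with hS
  have hNm : ∀ k, AEStronglyMeasurable (N k) P := fun k =>
    ((hN.stronglyAdapted k).mono (ℱ.le k)).aestronglyMeasurable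
  have hNN : ∀ j k, Integrable (fun ω => N j ω * N k ω) P := fun j k =>
    integrable_mul_of_sq (hNm j) (hNm k) (hL2 j) (hL2 k)
  have hXm : ∀ k, StronglyMeasurable[ℱ k] (X k) := fun k =>
    ((hN.stronglyAdapted k).sub ((hN.stronglyAdapted (k-1)).mono (ℱ.mono (Nat.sub_le k 1)))).mul_const _
  have hXint : ∀ k, Integrable (X k) P :=
    fun k => ((hN.integrable k).sub (hN.integrable (k-1))).mul_const _
  have hX2int : ∀ k, Integrable (fun ω => X k ω * X k ω) P := by
    intro k
    have hgood : Integrable (fun ω =>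
        (N k ω * N k ω + N (k-1) ω * N (k-1) ω - 2 * (N (k-1) ω * N k ω)) * (((k:ℝ))⁻¹ * ((k:ℝ))⁻¹)) P :=
      (((hL2 k).add (hNN (k-1) (k-1))).sub ((hNN (k-1) k).const_mul 2)).mul_const _
    refine hgood.congr (Eventually.of_forall fun ω => ?_)
    simp only [hX]
    ring
  have hDm : ∀ k j : ℕ, k ≤ j → StronglyMeasurable[ℱ (j-1)] (D k) := by
    intro k j hkj
    have h1 : StronglyMeasurable[ℱ (k-1)] (D k) :=
      stronglyMeasurable_condExp.sub
        (((hN.stronglyAdapted (k-1)).mul (hN.stronglyAdapted (k-1))))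
    exact h1.mono (ℱ.mono (by omega))
  have hDint : ∀ k, Integrable (D k) P := fun k =>
    integrable_condExp.sub (hNN (k-1) (k-1))
  have hSm : ∀ j k : ℕ, j ≤ k → StronglyMeasurable[ℱ (k-1)] (S j) := by
    intro j k hjk
    refine Finset.stronglyMeasurable_fun_sum _ fun i hi => ?_
    have hik : i ≤ k := le_trans (Finset.mem_Icc.mp hi).2 hjk
    have := (hDm i k hik).mul_const (((i:ℝ)^2)⁻¹)
    simpa [div_eq_mul_inv] using this
  -- conditional expectation of increments vanishes
  have hcondX : ∀ k : ℕ, 1 ≤ k → P[X k|ℱ (k-1)] =ᵐ[P] 0 := by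
    intro k hk
    have hXeq : X k = fun ω => ((k:ℝ))⁻¹ • (N k ω - N (k-1) ω) := by
      funext ω; simp only [hX, smul_eq_mul]; ring
    rw [hXeq]
    have h0 : P[fun ω => ((k:ℝ))⁻¹ • (N k ω - N (k-1) ω)|ℱ (k-1)]
        =ᵐ[P] ((k:ℝ))⁻¹ • P[fun ω => N k ω - N (k-1) ω|ℱ (k-1)] :=
      condExp_smul ((k:ℝ))⁻¹ _ _
    refine h0.trans ?_
    have h1 : P[fun ω => N k ω - N (k-1) ω|ℱ (k-1)]
        =ᵐ[P] P[N k|ℱ (k-1)] - P[N (k-1)|ℱ (k-1)] :=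
      condExp_sub (hN.integrable k) (hN.integrable (k-1)) _
    have h2 : P[N k|ℱ (k-1)] =ᵐ[P] N (k-1) := hN.condExp_ae_eq (Nat.sub_le k 1)
    have h3 : P[N (k-1)|ℱ (k-1)] =ᵐ[P] N (k-1) := hN.condExp_ae_eq le_rfl
    filter_upwards [h1, h2, h3] with ω h1 h2 h3
    simp only [Pi.smul_apply, Pi.zero_apply, h1, Pi.sub_apply, h2, h3, sub_self, smul_eq_mul,
      mul_zero]
  -- conditional variance identity
  have hcondX2 : ∀ k : ℕ, 1 ≤ k →
      P[fun ω => X k ω * X k ω|ℱ (k-1)] =ᵐ[P] fun ω => D k ω / (k:ℝ)^2 := by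
    intro k hk
    have hkpos : (0:ℝ) < (k:ℝ) := by exact_mod_cast hk
    have hXXeq : (fun ω => X k ω * X k ω) = fun ω => ((k:ℝ)^2)⁻¹ •
        ((fun ω' => N k ω' * N k ω') ω - ((fun ω' => (2 * N (k-1) ω') * N k ω') ω
          - (fun ω' => N (k-1) ω' * N (k-1) ω') ω)) := by
      funext ω
      simp only [hX, smul_eq_mul]
      have : ((k:ℝ)^2)⁻¹ = ((k:ℝ))⁻¹ * ((k:ℝ))⁻¹ := by
        rw [sq, mul_inv]
      rw [this]
      ring
    rw [hXXeq]
    have hsmul := condExp_smul (m := ℱ (k-1)) (μ := P) (((k:ℝ)^2)⁻¹)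
      (fun ω => ((fun ω' => N k ω' * N k ω') ω - ((fun ω' => (2 * N (k-1) ω') * N k ω') ω
          - (fun ω' => N (k-1) ω' * N (k-1) ω') ω)))
    refine hsmul.trans ?_
    have hintmid : Integrable (fun ω => (2 * N (k-1) ω) * N k ω) P := by
      have := (hNN (k-1) k).const_mul 2
      refine this.congr (Eventually.of_forall fun ω => by ring)
    have hsub1 : P[fun ω => ((fun ω' => N k ω' * N k ω') ω
        - ((fun ω' => (2 * N (k-1) ω') * N k ω') ω - (fun ω' => N (k-1) ω' * N (k-1) ω') ω))|ℱ (k-1)]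
        =ᵐ[P] P[fun ω' => N k ω' * N k ω'|ℱ (k-1)]
          - P[fun ω => (2 * N (k-1) ω) * N k ω - N (k-1) ω * N (k-1) ω|ℱ (k-1)] := by
      have := condExp_sub (m := ℱ (k-1)) (μ := P) (hL2 k)
        (hintmid.sub (hNN (k-1) (k-1)))
      exact this
    have hsub2 : P[fun ω => (2 * N (k-1) ω) * N k ω - N (k-1) ω * N (k-1) ω|ℱ (k-1)]
        =ᵐ[P] P[fun ω => (2 * N (k-1) ω) * N k ω|ℱ (k-1)]
          - P[fun ω => N (k-1) ω * N (k-1) ω|ℱ (k-1)] :=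
      condExp_sub hintmid (hNN (k-1) (k-1)) _
    have hmid : P[fun ω => (2 * N (k-1) ω) * N k ω|ℱ (k-1)]
        =ᵐ[P] fun ω => (2 * N (k-1) ω) * N (k-1) ω := by
      have hfm : StronglyMeasurable[ℱ (k-1)] (fun ω => 2 * N (k-1) ω) :=
        (hN.stronglyAdapted (k-1)).const_mul 2
      have hpull := condExp_mul_of_stronglyMeasurable_left hfm
        (by
          have := (hNN (k-1) k).const_mul 2
          exact this.congr (Eventually.of_forall fun ω => by simp [Pi.mul_apply]; ring))
        (hN.integrable k)
      refine hpull.trans ?_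
      have h2 : P[N k|ℱ (k-1)] =ᵐ[P] N (k-1) := hN.condExp_ae_eq (Nat.sub_le k 1)
      filter_upwards [h2] with ω h2
      simp only [Pi.mul_apply, h2]
    have hlast : P[fun ω => N (k-1) ω * N (k-1) ω|ℱ (k-1)]
        = fun ω => N (k-1) ω * N (k-1) ω :=
      condExp_of_stronglyMeasurable (ℱ.le (k-1))
        ((hN.stronglyAdapted (k-1)).mul (hN.stronglyAdapted (k-1))) (hNN (k-1) (k-1))
    filter_upwards [hsub1, hsub2, hmid] with ω h1 h2 h3
    simp only [Pi.smul_apply, smul_eq_mul]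
    rw [h1]
    simp only [Pi.sub_apply]
    rw [h2]
    simp only [Pi.sub_apply, h3, hlast]
    show _ = D k ω / (k:ℝ)^2
    simp only [hD]
    rw [div_eq_mul_inv]
    ring
  -- orthogonality
  have horth : ∀ k : ℕ, 1 ≤ k → ∀ f : Ω → ℝ, StronglyMeasurable[ℱ (k-1)] f →
      Integrable (fun ω => f ω * f ω) P → ∫ ω, f ω * X k ω ∂P = 0 := by
    intro k hk f hfm hf2
    have hfae : AEStronglyMeasurable f P := (hfm.mono (ℱ.le (k-1))).aestronglyMeasurable
    have hint1 : Integrable (fun ω => f ω * N k ω) P :=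
      integrable_mul_of_sq hfae (hNm k) hf2 (hL2 k)
    have hint1' : Integrable (f * N k) P := hint1
    have hint2 : Integrable (fun ω => f ω * N (k-1) ω) P :=
      integrable_mul_of_sq hfae (hNm (k-1)) hf2 (hL2 (k-1))
    have key : ∫ ω, f ω * N k ω ∂P = ∫ ω, f ω * N (k-1) ω ∂P := by
      have hic : ∫ ω, (P[f * N k|ℱ (k-1)]) ω ∂P = ∫ ω, f ω * N k ω ∂P :=
        integral_condExp (ℱ.le (k-1))
      rw [← hic]
      have hpull := condExp_mul_of_stronglyMeasurable_left hfm hint1' (hN.integrable k)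
      have h2 : P[N k|ℱ (k-1)] =ᵐ[P] N (k-1) := hN.condExp_ae_eq (Nat.sub_le k 1)
      refine integral_congr_ae ?_
      filter_upwards [hpull, h2] with ω h1 h2
      simp only [Pi.mul_apply] at h1 ⊢
      rw [h1, h2]
    have hXsplit : ∀ ω, f ω * X k ω = ((k:ℝ))⁻¹ * (f ω * N k ω - f ω * N (k-1) ω) := by
      intro ω; simp only [hX]; ring
    calc ∫ ω, f ω * X k ω ∂P
        = ∫ ω, ((k:ℝ))⁻¹ * (f ω * N k ω - f ω * N (k-1) ω) ∂P :=
          integral_congr_ae (Eventually.of_forall hXsplit)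
      _ = ((k:ℝ))⁻¹ * ∫ ω, (f ω * N k ω - f ω * N (k-1) ω) ∂P := integral_const_mul _ _
      _ = 0 := by rw [integral_sub hint1 hint2, key]; simp
  -- For each level K, convergence of the weighted sums on the good event
  have keyK : ∀ K : ℕ, ∀ᵐ ω ∂P, (∀ n : ℕ, 1 ≤ n → S n ω ≤ (K:ℝ)) →
      ∃ l : ℝ, Tendsto (fun n => ∑ k ∈ Finset.Icc 1 n, X k ω) atTop (𝓝 l) := by
    intro K
    set A : ℕ → Set Ω := fun k => {ω | ∀ j ∈ Finset.Icc 1 k, S j ω ≤ (K:ℝ)} with hA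
    set Y : ℕ → Ω → ℝ := fun k => (A k).indicator (X k) with hY
    set U : ℕ → Ω → ℝ := fun n ω => ∑ k ∈ Finset.Icc 1 n, Y k ω with hU
    set V : ℕ → Ω → ℝ := fun n ω => ∑ k ∈ Finset.Icc 1 n,
      (A k).indicator (fun ω' => D k ω' / (k:ℝ)^2) ω with hV
    have hAmeas : ∀ k, MeasurableSet[ℱ (k-1)] (A k) := by
      intro k
      have hAeq : A k = ⋂ j ∈ (Finset.Icc 1 k : Finset ℕ), {ω | S j ω ≤ (K:ℝ)} := by
        ext ω
        simp [hA, Set.mem_iInter]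
      rw [hAeq]
      refine MeasurableSet.biInter (Finset.Icc 1 k : Finset ℕ).countable_toSet fun j hj => ?_
      have hjk : j ≤ k := (Finset.mem_Icc.mp hj).2
      exact measurableSet_le (hSm j k hjk).measurable measurable_const
    have hAmeas0 : ∀ k, MeasurableSet (A k) := fun k => ℱ.le (k-1) _ (hAmeas k)
    have hYm : ∀ k, StronglyMeasurable[ℱ k] (Y k) := fun k =>
      (hXm k).indicator ((ℱ.mono (Nat.sub_le k 1)) _ (hAmeas k))
    have hYint : ∀ k, Integrable (Y k) P := fun k => (hXint k).indicator (hAmeas0 k)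
    have hY2eq : ∀ k, (fun ω => Y k ω * Y k ω)
        = (A k).indicator (fun ω => X k ω * X k ω) := by
      intro k
      funext ω
      by_cases hω : ω ∈ A k <;> simp [hY, Set.indicator_apply, hω]
    have hY2int : ∀ k, Integrable (fun ω => Y k ω * Y k ω) P := by
      intro k
      rw [hY2eq k]
      exact (hX2int k).indicator (hAmeas0 k)
    have hcondY : ∀ k : ℕ, 1 ≤ k → P[Y k|ℱ (k-1)] =ᵐ[P] 0 := by
      intro k hk
      refine (condExp_indicator (hXint k) (hAmeas k)).trans ?_
      filter_upwards [hcondX k hk] with ω hω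
      simp [Set.indicator_apply, hω]
    have hcondY2 : ∀ k : ℕ, 1 ≤ k → P[fun ω => Y k ω * Y k ω|ℱ (k-1)]
        =ᵐ[P] (A k).indicator (fun ω => D k ω / (k:ℝ)^2) := by
      intro k hk
      rw [hY2eq k]
      refine (condExp_indicator (hX2int k) (hAmeas k)).trans ?_
      filter_upwards [hcondX2 k hk] with ω hω
      by_cases hmem : ω ∈ A k <;> simp [Set.indicator_apply, hmem, hω]
    have hUmart : Martingale U ℱ P := martingale_sum_incr hYm hYint hcondY
    have hVint : ∀ n, Integrable (V n) P := by
      intro n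
      refine integrable_finset_sum _ fun k _ => ?_
      exact ((hDint k).div_const _).indicator (hAmeas0 k)
    -- second moment identity
    have hUsq : ∀ n, Integrable (fun ω => U n ω * U n ω) P ∧
        ∫ ω, U n ω * U n ω ∂P = ∫ ω, V n ω ∂P := by
      intro n
      induction n with
      | zero =>
          constructor
          · refine (integrable_const (0:ℝ)).congr (Eventually.of_forall fun ω => ?_)
            simp [hU]
          · refine integral_congr_ae (Eventually.of_forall fun ω => ?_)
            simp [hU, hV]
      | succ n ih =>
          have hUstep : ∀ ω, U (n+1) ω = U n ω + Y (n+1) ω := by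
            intro ω
            simp only [hU]
            rw [Finset.sum_Icc_succ_top (by omega : 1 ≤ n+1)]
          have hUm : StronglyMeasurable[ℱ n] (U n) := hUmart.stronglyAdapted n
          have hUae : AEStronglyMeasurable (U n) P :=
            (hUm.mono (ℱ.le n)).aestronglyMeasurable
          have hYae : AEStronglyMeasurable (Y (n+1)) P :=
            ((hYm (n+1)).mono (ℱ.le (n+1))).aestronglyMeasurable
          have hcrossint : Integrable (fun ω => U n ω * Y (n+1) ω) P :=
            integrable_mul_of_sq hUae hYae ih.1 (hY2int (n+1))
          -- the cross term vanishes
          have hcross : ∫ ω, U n ω * Y (n+1) ω ∂P = 0 := by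
            have hfm : StronglyMeasurable[ℱ ((n+1)-1)] ((A (n+1)).indicator (U n)) := by
              have : StronglyMeasurable[ℱ n] ((A (n+1)).indicator (U n)) :=
                hUm.indicator (hAmeas (n+1))
              exact this
            have hff : Integrable (fun ω => ((A (n+1)).indicator (U n)) ω
                * ((A (n+1)).indicator (U n)) ω) P := by
              have heq : (fun ω => ((A (n+1)).indicator (U n)) ω
                  * ((A (n+1)).indicator (U n)) ω)
                  = (A (n+1)).indicator (fun ω => U n ω * U n ω) := by
                funext ω
                by_cases hω : ω ∈ A (n+1) <;> simp [Set.indicator_apply, hω]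
              rw [heq]
              exact ih.1.indicator (hAmeas0 (n+1))
            have h0 := horth (n+1) (by omega) _ hfm hff
            rw [← h0]
            refine integral_congr_ae (Eventually.of_forall fun ω => ?_)
            by_cases hω : ω ∈ A (n+1) <;>
              simp [hY, Set.indicator_apply, hω]
          have hYsq : ∫ ω, Y (n+1) ω * Y (n+1) ω ∂P
              = ∫ ω, ((A (n+1)).indicator (fun ω' => D (n+1) ω' / ((n+1:ℕ):ℝ)^2)) ω ∂P := by
            have h1 : ∫ ω, (P[fun ω => Y (n+1) ω * Y (n+1) ω|ℱ ((n+1)-1)]) ω ∂P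
                = ∫ ω, Y (n+1) ω * Y (n+1) ω ∂P := integral_condExp (ℱ.le ((n+1)-1))
            rw [← h1]
            exact integral_congr_ae (hcondY2 (n+1) (by omega))
          have hexp : ∀ ω, U (n+1) ω * U (n+1) ω
              = U n ω * U n ω + (2 * (U n ω * Y (n+1) ω)
                + Y (n+1) ω * Y (n+1) ω) := by
            intro ω
            rw [hUstep ω]
            ring
          constructor
          · refine (ih.1.add ((hcrossint.const_mul 2).add (hY2int (n+1)))).congr
              (Eventually.of_forall fun ω => (hexp ω).symm)
          · calc ∫ ω, U (n+1) ω * U (n+1) ω ∂P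
                = ∫ ω, (U n ω * U n ω + (2 * (U n ω * Y (n+1) ω)
                    + Y (n+1) ω * Y (n+1) ω)) ∂P :=
                  integral_congr_ae (Eventually.of_forall hexp)
              _ = (∫ ω, U n ω * U n ω ∂P) + ((∫ ω, 2 * (U n ω * Y (n+1) ω) ∂P)
                    + ∫ ω, Y (n+1) ω * Y (n+1) ω ∂P) := by
                  have hsum2 : Integrable (fun ω => 2 * (U n ω * Y (n+1) ω)
                      + Y (n+1) ω * Y (n+1) ω) P :=
                    (hcrossint.const_mul 2).add (hY2int (n+1))
                  rw [integral_add ih.1 hsum2,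
                    integral_add (hcrossint.const_mul 2) (hY2int (n+1))]
              _ = (∫ ω, V n ω ∂P)
                    + ∫ ω, ((A (n+1)).indicator (fun ω' => D (n+1) ω' / ((n+1:ℕ):ℝ)^2)) ω ∂P := by
                  rw [ih.2, hYsq, integral_const_mul, hcross]
                  ring
              _ = ∫ ω, V (n+1) ω ∂P := by
                  rw [← integral_add (hVint n)
                    (((hDint (n+1)).div_const _).indicator (hAmeas0 (n+1)))]
                  refine integral_congr_ae (Eventually.of_forall fun ω => ?_)
                  simp only [hV]
                  rw [Finset.sum_Icc_succ_top (by omega : 1 ≤ n+1)]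
    -- pathwise bound on V
    have hAanti : ∀ k (ω : Ω), ω ∈ A (k+1) → ω ∈ A k := by
      intro k ω h j hj
      refine h j ?_
      rw [Finset.mem_Icc] at hj ⊢
      omega
    have hVbound : ∀ (ω : Ω) (n : ℕ), (ω ∈ A n → V n ω = S n ω) ∧ V n ω ≤ max (K:ℝ) 0 := by
      intro ω n
      induction n with
      | zero =>
          constructor
          · intro _
            simp [hV, hS]
          · have hV0 : V 0 ω = 0 := by simp [hV]
            rw [hV0]
            exact le_max_right _ _
      | succ n ih =>
          have hstep : V (n+1) ω = V n ω
              + (A (n+1)).indicator (fun ω' => D (n+1) ω' / ((n+1:ℕ):ℝ)^2) ω := by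
            simp only [hV]
            rw [Finset.sum_Icc_succ_top (by omega : 1 ≤ n+1)]
          have hfirst : ω ∈ A (n+1) → V (n+1) ω = S (n+1) ω := by
            intro hmem
            rw [hstep, ih.1 (hAanti n ω hmem), Set.indicator_of_mem hmem]
            simp only [hS]
            rw [Finset.sum_Icc_succ_top (by omega : 1 ≤ n+1)]
          refine ⟨hfirst, ?_⟩
          by_cases hmem : ω ∈ A (n+1)
          · rw [hfirst hmem]
            refine le_trans (hmem (n+1) ?_) (le_max_left _ _)
            rw [Finset.mem_Icc]
            omega
          · rw [hstep, Set.indicator_of_notMem hmem, add_zero]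
            exact ih.2
    -- L¹ bound
    have hL1 : ∀ n, eLpNorm (U n) 1 P ≤ ENNReal.ofReal ((max (K:ℝ) 0 + 1)/2) := by
      intro n
      have habs : ∀ ω, ‖U n ω‖ ≤ (U n ω * U n ω + 1)/2 := by
        intro ω
        rw [Real.norm_eq_abs]
        nlinarith [sq_nonneg (|U n ω| - 1), sq_abs (U n ω), abs_nonneg (U n ω)]
      have hintabs : ∫ ω, ‖U n ω‖ ∂P ≤ (max (K:ℝ) 0 + 1)/2 := by
        have h1 : ∫ ω, ‖U n ω‖ ∂P ≤ ∫ ω, (U n ω * U n ω + 1)/2 ∂P :=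
          integral_mono (hUmart.integrable n).norm
            (((hUsq n).1.add (integrable_const 1)).div_const 2) habs
        have h2 : ∫ ω, (U n ω * U n ω + 1)/2 ∂P = ((∫ ω, U n ω * U n ω ∂P) + 1)/2 := by
          rw [integral_div, integral_add (hUsq n).1 (integrable_const 1), integral_const]
          simp
        have h3 : ∫ ω, V n ω ∂P ≤ max (K:ℝ) 0 := by
          calc ∫ ω, V n ω ∂P ≤ ∫ _ω, max (K:ℝ) 0 ∂P :=
                integral_mono (hVint n) (integrable_const _) fun ω => (hVbound ω n).2
            _ = max (K:ℝ) 0 := by simp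
        rw [h2, (hUsq n).2] at h1
        linarith
      calc eLpNorm (U n) 1 P = ∫⁻ ω, ‖U n ω‖₊ ∂P := by
            rw [eLpNorm_one_eq_lintegral_enorm]; rfl
        _ = ENNReal.ofReal (∫ ω, ‖U n ω‖ ∂P) :=
            (ofReal_integral_norm_eq_lintegral_enorm (hUmart.integrable n)).symm
        _ ≤ ENNReal.ofReal ((max (K:ℝ) 0 + 1)/2) := ENNReal.ofReal_le_ofReal hintabs
    have hconv := hUmart.submartingale.ae_tendsto_limitProcess
      (R := ((max (K:ℝ) 0 + 1)/2).toNNReal) (fun n => hL1 n)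
    filter_upwards [hconv] with ω hω hSbound
    have hmemA : ∀ k, ω ∈ A k := fun k j hj => hSbound j (Finset.mem_Icc.mp hj).1
    have hUW : ∀ n, U n ω = ∑ k ∈ Finset.Icc 1 n, X k ω := by
      intro n
      simp only [hU]
      exact Finset.sum_congr rfl fun k _ => by
        simp only [hY]
        rw [Set.indicator_of_mem (hmemA k)]
    exact ⟨_, hω.congr hUW⟩
  -- assemble
  have hae := ae_all_iff.mpr keyK
  filter_upwards [hbd, hae] with ω hC hKey
  obtain ⟨C, hC0, hCle⟩ := hC
  obtain ⟨B, hB⟩ := weighted_bound (D := fun k => D k ω) hC0 hc1 hc2 hCle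
  have hSB : ∀ n : ℕ, 1 ≤ n → S n ω ≤ ((⌈B⌉₊ : ℕ) : ℝ) := by
    intro n _
    exact le_trans (hB n) (Nat.le_ceil B)
  obtain ⟨l, hl⟩ := hKey ⌈B⌉₊ hSB
  have hser : Tendsto (fun n => ∑ k ∈ Finset.Icc 1 n, (N k ω - N (k-1) ω) / k)
      atTop (𝓝 l) := by
    refine hl.congr fun n => Finset.sum_congr rfl fun k _ => ?_
    simp only [hX]
    rw [div_eq_mul_inv]
  have hkr := kronecker hser
  have hk2 : Tendsto (fun n : ℕ => (N n ω - N 0 ω) / n) atTop (𝓝 0) := by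
    refine hkr.congr fun n => ?_
    rw [telescope_sum N ω n]
  have hk3 : Tendsto (fun n : ℕ => N 0 ω / n) atTop (𝓝 0) :=
    tendsto_const_div_atTop_nhds_zero_nat _
  have := hk2.add hk3
  rw [add_zero] at this
  refine this.congr fun n => ?_
  rw [← add_div, sub_add_cancel]

private lemma all_L2 (N : ℕ → Ω → ℝ) (hN : Martingale N ℱ P)
    (w : ℕ → ℝ) (hw : Tendsto w atTop atTop)
    (hgrow : ∀ᵐ ω ∂P, Tendsto (fun n => (∑ k ∈ Finset.Icc 1 n,
      ((P[fun ω' => N k ω' * N k ω'|ℱ (k-1)]) ω - N (k-1) ω * N (k-1) ω)) / w n)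
      atTop (𝓝 1)) :
    ∀ k, Integrable (fun ω => N k ω * N k ω) P := by
  by_contra hcon
  push_neg at hcon
  obtain ⟨k0, hk0⟩ := hcon
  have hbad : ∀ k, k0 ≤ k → ¬ Integrable (fun ω => N k ω * N k ω) P := by
    intro k hk hint
    refine hk0 ?_
    have hcondeq : N k0 =ᵐ[P] P[N k|ℱ k0] := (hN.condExp_ae_eq hk).symm
    have hsq : Integrable (fun ω => (P[N k|ℱ k0]) ω * (P[N k|ℱ k0]) ω) P :=
      integrable_condExp_sq (ℱ.le k0) (hN.integrable k) hint
    refine hsq.congr ?_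
    filter_upwards [hcondeq] with ω hω
    rw [← hω]
  have hzero : ∀ k, k0 + 1 ≤ k → P[fun ω' => N k ω' * N k ω'|ℱ (k-1)] = 0 :=
    fun k hk => condExp_of_not_integrable (hbad k (by omega))
  -- pointwise: the sums decrease after k0
  set q : ℕ → Ω → ℝ := fun n ω => ∑ k ∈ Finset.Icc 1 n,
    ((P[fun ω' => N k ω' * N k ω'|ℱ (k-1)]) ω - N (k-1) ω * N (k-1) ω) with hq
  have hmono : ∀ (ω : Ω) (n : ℕ), k0 ≤ n → q n ω ≤ q k0 ω := by
    intro ω n hn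
    have hsplit : q n ω = q k0 ω + ∑ k ∈ Finset.Ioc k0 n,
        ((P[fun ω' => N k ω' * N k ω'|ℱ (k-1)]) ω - N (k-1) ω * N (k-1) ω) := by
      have h01 : ∀ m : ℕ, Finset.Icc 1 m = Finset.Ioc 0 m := by
        intro m
        ext a
        simp only [Finset.mem_Icc, Finset.mem_Ioc]
        omega
      simp only [hq, h01]
      rw [← Finset.sum_Ioc_consecutive _ (Nat.zero_le k0) hn]
    rw [hsplit]
    have hle : ∑ k ∈ Finset.Ioc k0 n,
        ((P[fun ω' => N k ω' * N k ω'|ℱ (k-1)]) ω - N (k-1) ω * N (k-1) ω) ≤ 0 := by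
      refine Finset.sum_nonpos fun k hk => ?_
      have hkk : k0 + 1 ≤ k := (Finset.mem_Ioc.mp hk).1
      rw [hzero k hkk]
      simp only [Pi.zero_apply, zero_sub, neg_nonpos]
      exact mul_self_nonneg _
    linarith
  -- but a.e. the sums tend to infinity
  have hexists : ∃ ω, Tendsto (fun n => q n ω / w n) atTop (𝓝 1) := by
    have hne : (ae P).NeBot := by
      refine ae_neBot.mpr ?_
      exact (IsProbabilityMeasure.ne_zero P)
    exact hgrow.exists
  obtain ⟨ω, hω⟩ := hexists
  have htop : Tendsto (fun n => q n ω) atTop atTop := by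
    have h1 : Tendsto (fun n => q n ω / w n * w n) atTop atTop :=
      Tendsto.pos_mul_atTop zero_lt_one hω hw
    have h2 : ∀ᶠ n in atTop, q n ω / w n * w n = q n ω := by
      filter_upwards [hw.eventually_ge_atTop 1] with n hn
      have : w n ≠ 0 := by linarith
      field_simp
    exact Tendsto.congr' h2 h1
  have hev := htop.eventually_gt_atTop (q k0 ω)
  rw [eventually_atTop] at hev
  obtain ⟨n0, hn0⟩ := hev
  have hcontr := hn0 (max n0 k0) (le_max_left _ _)
  have := hmono ω (max n0 k0) (le_max_right _ _)
  linarith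

end Prob

/-- Strong law for an ℝ²-valued martingale whose predictable
square variation has diagonal entries growing like n^{1+γ}ω₁ and nω₂ (ω₁ > 0,
ω₂ > 0) and off-diagonal entries O(n): then ‖M_n‖/n → 0 almost surely. -/
theorem vector_martingale_slln {Ω : Type*} {m0 : MeasurableSpace Ω}
    (P : Measure Ω) [IsProbabilityMeasure P] (ℱ : Filtration ℕ m0)
    (M : ℕ → Ω → Fin 2 → ℝ)
    (hmart : Martingale M ℱ P)
    (Q : ℕ → Ω → Fin 2 → Fin 2 → ℝ)
    (hQ : ∀ n ω i j, Q n ω i j = ∑ k ∈ Finset.Icc 1 n,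
      ((P[fun ω' => M k ω' i * M k ω' j | ℱ (k - 1)]) ω
        - M (k - 1) ω i * M (k - 1) ω j))
    (γ : ℝ) (hγ0 : 0 < γ) (hγ1 : γ < 1)
    (ω₁ ω₂ : ℝ) (hω₁ : 0 < ω₁) (hω₂ : 0 < ω₂)
    (h11 : ∀ᵐ ω ∂P, Tendsto (fun n : ℕ => Q n ω 0 0 / ((n : ℝ) ^ (1 + γ) * ω₁))
      atTop (nhds 1))
    (h22 : ∀ᵐ ω ∂P, Tendsto (fun n : ℕ => Q n ω 1 1 / ((n : ℝ) * ω₂))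
      atTop (nhds 1))
    (hoff : ∃ C : ℝ, ∀ᵐ ω ∂P, ∀ n : ℕ, 1 ≤ n →
      |Q n ω 0 1| ≤ C * n ∧ |Q n ω 1 0| ≤ C * n) :
    ∀ᵐ ω ∂P, Tendsto (fun n : ℕ =>
        Real.sqrt ((M n ω 0) ^ 2 + (M n ω 1) ^ 2) / (n : ℝ))
      atTop (nhds 0) := by
  classical
  set c : ℝ := 1 + γ with hc
  have hc1 : 1 ≤ c := by linarith
  have hc2 : c < 2 := by linarith
  -- coordinate martingales
  have hM0 : Martingale (fun n ω => M n ω 0) ℱ P := coord_martingale hmart 0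
  have hM1 : Martingale (fun n ω => M n ω 1) ℱ P := coord_martingale hmart 1
  -- growth functions
  have hw0 : Tendsto (fun n : ℕ => (n:ℝ) ^ (1+γ) * ω₁) atTop atTop := by
    refine Tendsto.atTop_mul_const hω₁ ?_
    exact (tendsto_rpow_atTop (by linarith)).comp tendsto_natCast_atTop_atTop
  have hw1 : Tendsto (fun n : ℕ => (n:ℝ) * ω₂) atTop atTop :=
    Tendsto.atTop_mul_const hω₂ tendsto_natCast_atTop_atTop
  -- every coordinate is square integrable
  have hQ00 : ∀ n (ω : Ω), Q n ω 0 0 = ∑ k ∈ Finset.Icc 1 n,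
      ((P[fun ω' => M k ω' 0 * M k ω' 0|ℱ (k-1)]) ω - M (k-1) ω 0 * M (k-1) ω 0) :=
    fun n ω => hQ n ω 0 0
  have hQ11 : ∀ n (ω : Ω), Q n ω 1 1 = ∑ k ∈ Finset.Icc 1 n,
      ((P[fun ω' => M k ω' 1 * M k ω' 1|ℱ (k-1)]) ω - M (k-1) ω 1 * M (k-1) ω 1) :=
    fun n ω => hQ n ω 1 1
  have hL2_0 : ∀ k, Integrable (fun ω => M k ω 0 * M k ω 0) P := by
    refine all_L2 _ hM0 _ hw0 ?_
    filter_upwards [h11] with ω hω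
    refine hω.congr fun n => ?_
    rw [hQ00 n ω]
  have hL2_1 : ∀ k, Integrable (fun ω => M k ω 1 * M k ω 1) P := by
    refine all_L2 _ hM1 _ hw1 ?_
    filter_upwards [h22] with ω hω
    refine hω.congr fun n => ?_
    rw [hQ11 n ω]
  -- a.e. growth bounds
  have hbd0 : ∀ᵐ ω ∂P, ∃ C : ℝ, 0 ≤ C ∧ ∀ n : ℕ, 1 ≤ n →
      (∑ k ∈ Finset.Icc 1 n, ((P[fun ω' => M k ω' 0 * M k ω' 0|ℱ (k-1)]) ω
        - M (k-1) ω 0 * M (k-1) ω 0)) ≤ C * (n:ℝ)^c := by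
    filter_upwards [h11] with ω hω
    have hev : ∀ᶠ n : ℕ in atTop, Q n ω 0 0 / ((n:ℝ) ^ (1+γ) * ω₁) ≤ 2 :=
      hω.eventually_le_const (by norm_num)
    rw [eventually_atTop] at hev
    obtain ⟨n0, hn0⟩ := hev
    set C0 : ℝ := ∑ j ∈ Finset.range (n0+1), |Q j ω 0 0| with hC0
    have hC0nn : 0 ≤ C0 := Finset.sum_nonneg fun j _ => abs_nonneg _
    refine ⟨2*ω₁ + C0, by positivity, fun n hn => ?_⟩
    rw [← hQ00 n ω]
    have hrpow1 : (1:ℝ) ≤ (n:ℝ)^c := by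
      refine Real.one_le_rpow ?_ (by linarith)
      exact_mod_cast hn
    by_cases hcase : n0 ≤ n
    · have h1 := hn0 n hcase
      have hpos : (0:ℝ) < (n:ℝ)^(1+γ) * ω₁ := by
        have : (0:ℝ) < (n:ℝ) := by exact_mod_cast hn
        positivity
      rw [div_le_iff₀ hpos] at h1
      calc Q n ω 0 0 ≤ 2 * ((n:ℝ)^(1+γ) * ω₁) := h1
        _ = 2*ω₁ * (n:ℝ)^c := by rw [hc]; ring
        _ ≤ (2*ω₁ + C0) * (n:ℝ)^c := by nlinarith
    · have hmem : n ∈ Finset.range (n0+1) := Finset.mem_range.mpr (by omega)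
      calc Q n ω 0 0 ≤ |Q n ω 0 0| := le_abs_self _
        _ ≤ C0 := Finset.single_le_sum (fun j _ => abs_nonneg (Q j ω 0 0)) hmem
        _ = C0 * 1 := by ring
        _ ≤ (2*ω₁ + C0) * (n:ℝ)^c := by nlinarith
  have hbd1 : ∀ᵐ ω ∂P, ∃ C : ℝ, 0 ≤ C ∧ ∀ n : ℕ, 1 ≤ n →
      (∑ k ∈ Finset.Icc 1 n, ((P[fun ω' => M k ω' 1 * M k ω' 1|ℱ (k-1)]) ω
        - M (k-1) ω 1 * M (k-1) ω 1)) ≤ C * (n:ℝ)^c := by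
    filter_upwards [h22] with ω hω
    have hev : ∀ᶠ n : ℕ in atTop, Q n ω 1 1 / ((n:ℝ) * ω₂) ≤ 2 :=
      hω.eventually_le_const (by norm_num)
    rw [eventually_atTop] at hev
    obtain ⟨n0, hn0⟩ := hev
    set C0 : ℝ := ∑ j ∈ Finset.range (n0+1), |Q j ω 1 1| with hC0
    have hC0nn : 0 ≤ C0 := Finset.sum_nonneg fun j _ => abs_nonneg _
    refine ⟨2*ω₂ + C0, by positivity, fun n hn => ?_⟩
    rw [← hQ11 n ω]
    have hn1 : (1:ℝ) ≤ (n:ℝ) := by exact_mod_cast hn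
    have hrpow1 : (1:ℝ) ≤ (n:ℝ)^c := Real.one_le_rpow hn1 (by linarith)
    have hnc : (n:ℝ) ≤ (n:ℝ)^c := by
      calc (n:ℝ) = (n:ℝ)^(1:ℝ) := (Real.rpow_one _).symm
        _ ≤ (n:ℝ)^c := Real.rpow_le_rpow_of_exponent_le hn1 hc1
    by_cases hcase : n0 ≤ n
    · have h1 := hn0 n hcase
      have hpos : (0:ℝ) < (n:ℝ) * ω₂ := by
        have : (0:ℝ) < (n:ℝ) := by linarith
        positivity
      rw [div_le_iff₀ hpos] at h1
      calc Q n ω 1 1 ≤ 2 * ((n:ℝ) * ω₂) := h1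
        _ = 2*ω₂ * (n:ℝ) := by ring
        _ ≤ 2*ω₂ * (n:ℝ)^c := by nlinarith
        _ ≤ (2*ω₂ + C0) * (n:ℝ)^c := by nlinarith
    · have hmem : n ∈ Finset.range (n0+1) := Finset.mem_range.mpr (by omega)
      calc Q n ω 1 1 ≤ |Q n ω 1 1| := le_abs_self _
        _ ≤ C0 := Finset.single_le_sum (fun j _ => abs_nonneg (Q j ω 1 1)) hmem
        _ = C0 * 1 := by ring
        _ ≤ (2*ω₂ + C0) * (n:ℝ)^c := by nlinarith
  -- coordinatewise strong laws
  have ht0 := scalar_slln (ℱ := ℱ) _ hM0 hL2_0 c hc1 hc2 hbd0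
  have ht1 := scalar_slln (ℱ := ℱ) _ hM1 hL2_1 c hc1 hc2 hbd1
  filter_upwards [ht0, ht1] with ω h0 h1
  have hsq : Tendsto (fun n : ℕ => Real.sqrt ((M n ω 0 / n)^2 + (M n ω 1 / n)^2))
      atTop (𝓝 0) := by
    have hsum : Tendsto (fun n : ℕ => (M n ω 0 / n)^2 + (M n ω 1 / n)^2)
        atTop (𝓝 0) := by
      have := (h0.pow 2).add (h1.pow 2)
      norm_num at this
      exact this
    have hcont := (Real.continuous_sqrt.tendsto 0).comp hsum
    rw [Real.sqrt_zero] at hcont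
    exact hcont
  rw [show (nhds (0:ℝ)) = 𝓝 0 from rfl]
  refine hsq.congr' ?_
  filter_upwards [eventually_ge_atTop 1] with n hn
  have hnpos : (0:ℝ) < (n:ℝ) := by exact_mod_cast hn
  rw [div_pow, div_pow, ← add_div,
    Real.sqrt_div (by positivity) ((n:ℝ)^2), Real.sqrt_sq hnpos.le]
end
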